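/- Let A = C*(x₁,…,x_n) be an MF C*-algebra, let π : A → M_N(ℂ) be a unital *-homomorphism, and define τ(a) = τ_N(π(a)). Then τ is an MF-trace on A. Concretely: if Ā_k ∈ M_{m_k}(ℂ)^n satisfy ‖p(Ā_k)‖ → ‖p(x̄)‖ for all *-polynomials p, then the tuples B̄_k = Ā_k ⊕ π(x̄)^{(k m_k)} ∈ M_{m_k(1+kN)}(ℂ)^n satisfy both ‖p(B̄_k)‖ → ‖p(x̄)‖ and τ_{m_k(1+kN)}(p(B̄_k)) → τ(p(x̄)). -/

import Mathlib

open scoped Matrix.Norms.L2Operator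

/-- Evaluation of a noncommutative *-polynomial at a tuple. -/
noncomputable def evalStarPoly {A : Type*} [Ring A] [Algebra ℂ A] [StarRing A]
    {n : ℕ} (x : Fin n → A) (p : FreeAlgebra ℂ (Fin n × Bool)) : A :=
  FreeAlgebra.lift ℂ (fun q : Fin n × Bool => if q.2 then star (x q.1) else x q.1) p

lemma evalStarPoly_map {A B : Type*} [Ring A] [Algebra ℂ A] [StarRing A]
    [Ring B] [Algebra ℂ B] [StarRing B] (φ : A →⋆ₐ[ℂ] B)
    {n : ℕ} (x : Fin n → A) (p : FreeAlgebra ℂ (Fin n × Bool)) :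
    φ (evalStarPoly x p) = evalStarPoly (fun i => φ (x i)) p := by
  have h : (φ.toAlgHom.comp (FreeAlgebra.lift ℂ
        (fun q : Fin n × Bool => if q.2 then star (x q.1) else x q.1)) :
        FreeAlgebra ℂ (Fin n × Bool) →ₐ[ℂ] B)
      = FreeAlgebra.lift ℂ
        (fun q : Fin n × Bool => if q.2 then star (φ (x q.1)) else φ (x q.1)) := by
    apply FreeAlgebra.hom_ext
    funext q
    rcases q with ⟨i, b⟩
    cases b <;> simp [map_star]
  simpa [evalStarPoly] using congrArg (fun f : FreeAlgebra ℂ (Fin n × Bool) →ₐ[ℂ] B => f p) h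

lemma evalStarPoly_pi {ι : Type*} {A : ι → Type*} [∀ j, Ring (A j)] [∀ j, Algebra ℂ (A j)]
    [∀ j, StarRing (A j)] {n : ℕ} (x : Fin n → ∀ j, A j) (p : FreeAlgebra ℂ (Fin n × Bool))
    (j : ι) :
    evalStarPoly x p j = evalStarPoly (fun i => x i j) p := by
  have := evalStarPoly_map (A := ∀ j, A j) (B := A j)
    { Pi.evalAlgHom ℂ A j with map_star' := fun _ => rfl } x p
  exact this


noncomputable instance matCStarAlgebra (s : Type*) [Fintype s] [DecidableEq s] :
    CStarAlgebra (Matrix s s ℂ) :=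
  { Matrix.instL2OpNormedRing, Matrix.instCStarRing, Matrix.instL2OpNormedAlgebra,
    (by exact FiniteDimensional.complete ℂ (Matrix s s ℂ) : CompleteSpace (Matrix s s ℂ)),
    (inferInstance : StarRing (Matrix s s ℂ)),
    (inferInstance : StarModule ℂ (Matrix s s ℂ)) with }

section
variable {o : Type*} [Fintype o] [DecidableEq o] {d : o → Type*} [∀ i, Fintype (d i)]
  [∀ i, DecidableEq (d i)]

/-- blockDiagonal' as a star algebra hom. -/
noncomputable def blockDiagStarAlgHom :
    (∀ i, Matrix (d i) (d i) ℂ) →⋆ₐ[ℂ] Matrix (Σ i, d i) (Σ i, d i) ℂ :=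
  { Matrix.blockDiagonal'RingHom d ℂ with
    commutes' := fun r => by
      simp only [Matrix.blockDiagonal'RingHom, RingHom.coe_mk, MonoidHom.coe_mk, OneHom.coe_mk,
        Algebra.algebraMap_eq_smul_one]
      rw [Matrix.blockDiagonal'_smul, Matrix.blockDiagonal'_one]
    map_star' := fun M => by
      show Matrix.blockDiagonal' (star M) = star (Matrix.blockDiagonal' M)
      rw [Matrix.star_eq_conjTranspose, Matrix.blockDiagonal'_conjTranspose]
      rfl }

lemma blockDiagStarAlgHom_apply (M : ∀ i, Matrix (d i) (d i) ℂ) :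
    blockDiagStarAlgHom M = Matrix.blockDiagonal' M := rfl

lemma norm_blockDiag (M : ∀ i, Matrix (d i) (d i) ℂ) :
    ‖blockDiagStarAlgHom M‖ = ‖M‖ :=
  NonUnitalStarAlgHom.norm_map blockDiagStarAlgHom
    (fun a b hab => Matrix.blockDiagonal'_injective
      (by simpa [blockDiagStarAlgHom_apply] using hab)) M

end

section
variable {m n : Type*} [Fintype m] [DecidableEq m] [Fintype n] [DecidableEq n]

noncomputable def reindexStarAlgEquiv (e : m ≃ n) :
    Matrix m m ℂ ≃⋆ₐ[ℂ] Matrix n n ℂ :=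
  { Matrix.reindexAlgEquiv ℂ ℂ e with
    map_smul' := fun c M => by
      simp [Matrix.reindexAlgEquiv, Matrix.reindex, Matrix.submatrix_smul]
    map_star' := fun M => by
      simp only [Matrix.reindexAlgEquiv, Matrix.reindex, Matrix.star_eq_conjTranspose]
      exact (Matrix.conjTranspose_submatrix M _ _).symm }

lemma reindexStarAlgEquiv_apply (e : m ≃ n) (M : Matrix m m ℂ) :
    reindexStarAlgEquiv e M = Matrix.reindex e e M := rfl

lemma norm_reindex (e : m ≃ n) (M : Matrix m m ℂ) :
    ‖reindexStarAlgEquiv e M‖ = ‖M‖ :=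
  StarAlgEquiv.norm_map (reindexStarAlgEquiv e) M

lemma trace_reindex' (e : m ≃ n) (M : Matrix m m ℂ) :
    Matrix.trace (reindexStarAlgEquiv e M) = Matrix.trace M := by
  rw [reindexStarAlgEquiv_apply]
  show ∑ i, M.submatrix e.symm e.symm i i = ∑ i, M i i
  exact Fintype.sum_equiv e.symm _ _ (fun i => rfl)

/-- entry bound for L2 operator norm -/
lemma entry_le_l2_opNorm (M : Matrix m m ℂ) (i j : m) : ‖M i j‖ ≤ ‖M‖ := by
  classical
  have key := Matrix.l2_opNorm_mulVec M (EuclideanSpace.single j (1 : ℂ))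
  rw [EuclideanSpace.norm_single, norm_one, mul_one] at key
  refine le_trans ?_ key
  set v : EuclideanSpace ℂ m := (EuclideanSpace.equiv m ℂ).symm (M.mulVec (EuclideanSpace.single j 1))
  have hv : v i = M i j := by
    show (M.mulVec (EuclideanSpace.single j 1)) i = M i j
    simp only [Matrix.mulVec, dotProduct, EuclideanSpace.single]
    rw [Finset.sum_eq_single j] <;> simp +contextual [Pi.single_apply]
  rw [← hv, EuclideanSpace.norm_eq]
  have : ‖v i‖ = Real.sqrt (‖v i‖ ^ 2) := by
    rw [Real.sqrt_sq (norm_nonneg _)]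
  rw [this]
  apply Real.sqrt_le_sqrt
  exact Finset.single_le_sum (f := fun r => ‖v r‖ ^ 2) (fun r _ => sq_nonneg _) (Finset.mem_univ i)

lemma trace_le (M : Matrix m m ℂ) : ‖Matrix.trace M‖ ≤ (Fintype.card m) * ‖M‖ := by
  calc ‖Matrix.trace M‖ ≤ ∑ i, ‖M i i‖ := norm_sum_le _ _
    _ ≤ ∑ _i : m, ‖M‖ := Finset.sum_le_sum fun i _ => entry_le_l2_opNorm M i i
    _ = (Fintype.card m) * ‖M‖ := by
        rw [Finset.sum_const, nsmul_eq_mul]; rfl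
end

/-- The big tuple: `Am` on the `inl` block and `Pm` on each `inr` block. -/
noncomputable def bigTuple {n mk N tk : ℕ} (Am : Fin n → Matrix (Fin mk) (Fin mk) ℂ)
    (Pm : Fin n → Matrix (Fin N) (Fin N) ℂ) (i : Fin n) :
    ∀ j : Unit ⊕ Fin tk,
      Matrix (Fin (Sum.elim (fun _ => mk) (fun _ => N) j))
        (Fin (Sum.elim (fun _ => mk) (fun _ => N) j)) ℂ :=
  fun j => Sum.rec (fun _ => Am i) (fun _ => Pm i) j

@[simp] lemma bigTuple_inl {n mk N tk : ℕ} (Am : Fin n → Matrix (Fin mk) (Fin mk) ℂ)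
    (Pm : Fin n → Matrix (Fin N) (Fin N) ℂ) (i : Fin n) (u : Unit) :
    bigTuple (tk := tk) Am Pm i (Sum.inl u) = Am i := rfl

@[simp] lemma bigTuple_inr {n mk N tk : ℕ} (Am : Fin n → Matrix (Fin mk) (Fin mk) ℂ)
    (Pm : Fin n → Matrix (Fin N) (Fin N) ℂ) (i : Fin n) (j : Fin tk) :
    bigTuple Am Pm i (Sum.inr j) = Pm i := rfl


/-- The MF-trace condition for `τ` relative to a generating tuple `x`. -/
def IsMFTrace {A : Type*} [NormedRing A] [StarRing A] [CStarRing A] [NormedAlgebra ℂ A]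
    {n : ℕ} (x : Fin n → A) (τ : A → ℂ) : Prop :=
  ∃ m : ℕ → ℕ, (∀ k, 0 < m k) ∧
    ∃ Amat : (k : ℕ) → Fin n → Matrix (Fin (m k)) (Fin (m k)) ℂ,
      ∀ p : FreeAlgebra ℂ (Fin n × Bool),
        Filter.Tendsto (fun k => ‖evalStarPoly (Amat k) p‖) Filter.atTop
          (nhds ‖evalStarPoly x p‖) ∧
        Filter.Tendsto (fun k => Matrix.trace (evalStarPoly (Amat k) p) / (m k : ℂ))
          Filter.atTop (nhds (τ (evalStarPoly x p)))

open Filter in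
/-- Let `A = C*(x₁,…,x_n)` be an MF C*-algebra (witnessed by matrix
microstates `Ā_k` with `‖p(Ā_k)‖ → ‖p(x̄)‖` for every *-polynomial `p`), let
`π : A → M_N(ℂ)` be a unital *-homomorphism, and set `τ(a) = τ_N(π(a)) = Tr(π(a))/N`.
Then `τ` is an MF-trace on `A`. -/
theorem stmt11 {A : Type*}
    [NormedRing A] [StarRing A] [CStarRing A] [NormedAlgebra ℂ A] [CompleteSpace A]
    [StarModule ℂ A]
    {n : ℕ} (x : Fin n → A)
    (hgen : (StarAlgebra.adjoin ℂ (Set.range x)).topologicalClosure = ⊤)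
    (hMF : ∃ m : ℕ → ℕ, (∀ k, 0 < m k) ∧
      ∃ Amat : (k : ℕ) → Fin n → Matrix (Fin (m k)) (Fin (m k)) ℂ,
        ∀ p : FreeAlgebra ℂ (Fin n × Bool),
          Filter.Tendsto (fun k => ‖evalStarPoly (Amat k) p‖) Filter.atTop
            (nhds ‖evalStarPoly x p‖))
    (N : ℕ) (hN : 0 < N) (π : A →⋆ₐ[ℂ] Matrix (Fin N) (Fin N) ℂ) :
    IsMFTrace x (fun a => Matrix.trace (π a) / (N : ℂ)) := by
  classical
  obtain ⟨m, hm, Amat, hA⟩ := hMF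
  letI : CStarAlgebra A :=
    { ‹NormedRing A›, ‹StarRing A›, ‹CStarRing A›, ‹NormedAlgebra ℂ A›, ‹CompleteSpace A›,
      ‹StarModule ℂ A› with }
  -- sizes
  set t : ℕ → ℕ := fun k => k * m k with ht
  set m' : ℕ → ℕ := fun k => m k + t k * N with hm'def
  have hm'pos : ∀ k, 0 < m' k := fun k => lt_of_lt_of_le (hm k) (Nat.le_add_right _ _)
  have hcard : ∀ k, Fintype.card
      (Σ j : Unit ⊕ Fin (t k), Fin (Sum.elim (fun _ => m k) (fun _ => N) j)) = m' k := by
    intro k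
    simp [Fintype.card_sigma, Fintype.sum_sum_type, hm'def]
  let e : (k : ℕ) → (Σ j : Unit ⊕ Fin (t k), Fin (Sum.elim (fun _ => m k) (fun _ => N) j))
      ≃ Fin (m' k) := fun k => Fintype.equivFinOfCardEq (hcard k)
  let B : (k : ℕ) → Fin n → ∀ j : Unit ⊕ Fin (t k),
      Matrix (Fin (Sum.elim (fun _ => m k) (fun _ => N) j))
        (Fin (Sum.elim (fun _ => m k) (fun _ => N) j)) ℂ :=
    fun k => bigTuple (Amat k) (fun i => π (x i))
  let Θ : (k : ℕ) → (∀ j : Unit ⊕ Fin (t k),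
        Matrix (Fin (Sum.elim (fun _ => m k) (fun _ => N) j))
          (Fin (Sum.elim (fun _ => m k) (fun _ => N) j)) ℂ)
      →⋆ₐ[ℂ] Matrix (Fin (m' k)) (Fin (m' k)) ℂ :=
    fun k => (StarAlgHomClass.toStarAlgHom (reindexStarAlgEquiv (e k))).comp blockDiagStarAlgHom
  refine ⟨m', hm'pos, fun k i => Θ k (B k i), fun p => ?_⟩
  have hev : ∀ k, evalStarPoly (fun i => Θ k (B k i)) p = Θ k (evalStarPoly (B k) p) :=
    fun k => (evalStarPoly_map (Θ k) (B k) p).symm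
  have hev1 : ∀ k (u : Unit), evalStarPoly (B k) p (Sum.inl u) = evalStarPoly (Amat k) p := by
    intro k u
    rw [evalStarPoly_pi]
    rfl
  have hev2 : ∀ k (j : Fin (t k)),
      evalStarPoly (B k) p (Sum.inr j) = π (evalStarPoly x p) := by
    intro k j
    rw [evalStarPoly_pi]
    exact (evalStarPoly_map π x p).symm
  have hΘ : ∀ k (f : ∀ j : Unit ⊕ Fin (t k),
        Matrix (Fin (Sum.elim (fun _ => m k) (fun _ => N) j))
          (Fin (Sum.elim (fun _ => m k) (fun _ => N) j)) ℂ),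
      Θ k f = reindexStarAlgEquiv (e k) (blockDiagStarAlgHom f) := fun _ _ => rfl
  constructor
  · -- norm convergence
    have hnorm_eq : ∀ k, ‖evalStarPoly (fun i => Θ k (B k i)) p‖ = ‖evalStarPoly (B k) p‖ := by
      intro k
      rw [hev, hΘ, norm_reindex, norm_blockDiag]
    have hc : ‖π (evalStarPoly x p)‖ ≤ ‖evalStarPoly x p‖ :=
      NonUnitalStarAlgHom.norm_apply_le π _
    have hmax : ∀ k, 1 ≤ k → ‖evalStarPoly (B k) p‖
        = max ‖evalStarPoly (Amat k) p‖ ‖π (evalStarPoly x p)‖ := by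
      intro k hk
      apply le_antisymm
      · rw [pi_norm_le_iff_of_nonneg (le_trans (norm_nonneg _) (le_max_left _ _))]
        intro j
        rcases j with u | j
        · rw [hev1 k u]; exact le_max_left _ _
        · rw [hev2 k j]; exact le_max_right _ _
      · have htpos : 0 < t k := Nat.mul_pos hk (hm k)
        apply max_le
        · rw [← hev1 k ()]; exact norm_le_pi_norm _ _
        · rw [← hev2 k ⟨0, htpos⟩]; exact norm_le_pi_norm _ _
    have hmaxlim : Tendsto
        (fun k => max ‖evalStarPoly (Amat k) p‖ ‖π (evalStarPoly x p)‖) atTop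
        (nhds (max ‖evalStarPoly x p‖ ‖π (evalStarPoly x p)‖)) :=
      (hA p).max tendsto_const_nhds
    rw [max_eq_left hc] at hmaxlim
    refine Tendsto.congr' ?_ hmaxlim
    filter_upwards [Filter.eventually_ge_atTop 1] with k hk
    rw [hnorm_eq, hmax k hk]
  · -- trace convergence
    set c : ℂ := Matrix.trace (π (evalStarPoly x p)) with hc
    have htr : ∀ k, Matrix.trace (evalStarPoly (fun i => Θ k (B k i)) p)
        = Matrix.trace (evalStarPoly (Amat k) p) + (t k : ℂ) * c := by
      intro k
      rw [hev, hΘ, trace_reindex', blockDiagStarAlgHom_apply, Matrix.trace_blockDiagonal',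
        Fintype.sum_sum_type]
      simp [hev1, hev2, mul_comm]
      congr 1
      calc _ = ∑ _a : Fin (t k), c := Finset.sum_congr rfl (fun _ _ => rfl)
        _ = _ := by simp
    have hNR : (0:ℝ) < N := by exact_mod_cast hN
    have hden : ∀ k : ℕ, (0:ℝ) < 1 + (k:ℝ) * N := by intro k; positivity
    have h0 : Tendsto (fun k : ℕ => ((1:ℝ) + (k:ℝ) * N)⁻¹) atTop (nhds 0) := by
      apply Tendsto.inv_tendsto_atTop
      apply tendsto_atTop_add_const_left
      exact Tendsto.atTop_mul_const hNR tendsto_natCast_atTop_atTop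
    have hm'cast : ∀ k, ((m' k : ℝ)) = (m k : ℝ) * (1 + (k:ℝ) * N) := by
      intro k
      rw [hm'def]
      push_cast [ht]
      ring
    -- first summand tends to 0
    have h1 : Tendsto (fun k => Matrix.trace (evalStarPoly (Amat k) p) / (m' k : ℂ)) atTop
        (nhds 0) := by
      apply squeeze_zero_norm
        (a := fun k => ‖evalStarPoly (Amat k) p‖ * ((1:ℝ) + (k:ℝ) * N)⁻¹)
      · intro k
        rw [norm_div]
        have hnc : ‖((m' k : ℂ))‖ = (m' k : ℝ) := by
          simp
        rw [hnc, div_le_iff₀ (by exact_mod_cast hm'pos k)]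
        have hb := trace_le (evalStarPoly (Amat k) p)
        rw [Fintype.card_fin] at hb
        refine le_trans hb (le_of_eq ?_)
        rw [hm'cast k]
        field_simp
      · have := (hA p).mul h0
        simpa using this
    -- second summand
    have hratioR : Tendsto (fun k : ℕ => (k:ℝ) / (1 + (k:ℝ) * N)) atTop (nhds (1 / N)) := by
      have h : Tendsto (fun k : ℕ => (1:ℝ) / k + N) atTop (nhds ((0:ℝ) + N)) :=
        tendsto_one_div_atTop_nhds_zero_nat.add tendsto_const_nhds
      have h2 := h.inv₀ (by positivity)
      rw [zero_add] at h2
      have h3 : (N:ℝ)⁻¹ = 1 / N := (one_div _).symm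
      rw [h3] at h2
      refine Tendsto.congr' ?_ h2
      filter_upwards [Filter.eventually_ge_atTop 1] with k hk
      have hk0 : (k:ℝ) ≠ 0 := by
        have : (0:ℕ) < k := hk
        exact_mod_cast this.ne'
      rw [show (1:ℝ)/k + N = (1 + (k:ℝ)*N)/k from by field_simp, inv_div]
    have hratioC : Tendsto (fun k : ℕ => (k:ℂ) / (1 + (k:ℂ) * N)) atTop (nhds (1 / N)) := by
      have h4 := (Complex.continuous_ofReal.tendsto (1 / (N:ℝ))).comp hratioR
      rw [Function.comp_def] at h4
      have h5 : ((1 / (N:ℝ) : ℝ) : ℂ) = 1 / (N:ℂ) := by push_cast; ring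
      rw [h5] at h4
      refine Tendsto.congr (fun k => ?_) h4
      push_cast
      ring
    have h2 : Tendsto (fun k : ℕ => ((k:ℂ) / (1 + (k:ℂ) * N)) * c) atTop
        (nhds ((1 / N) * c)) := hratioC.mul_const c
    have htotal := h1.add h2
    rw [zero_add] at htotal
    have hconv : ∀ k, Matrix.trace (evalStarPoly (fun i => Θ k (B k i)) p) / (m' k : ℂ)
        = Matrix.trace (evalStarPoly (Amat k) p) / (m' k : ℂ)
          + ((k:ℂ) / (1 + (k:ℂ) * N)) * c := by
      intro k
      rw [htr k, add_div]
      congr 1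
      have hmk : ((m k : ℂ)) ≠ 0 := Nat.cast_ne_zero.2 (hm k).ne'
      have hm'c : ((m' k : ℂ)) = (m k : ℂ) * (1 + (k:ℂ) * N) := by
        rw [hm'def]; push_cast [ht]; ring
      have htc : ((t k : ℂ)) = (k:ℂ) * (m k : ℂ) := by push_cast [ht]; ring
      rw [mul_div_right_comm, hm'c, htc, mul_comm ((k:ℂ)) ((m k:ℂ)),
        mul_div_mul_left _ _ hmk]
    have goal_eq : (1 / (N:ℂ)) * c = c / N := by ring
    rw [goal_eq] at htotal
    exact Tendsto.congr (fun k => (hconv k).symm) htotal
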